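/- Let L > 0 and fix α, β with 0 < |α| < 1 and β > 0. Let u, v : [0,L]² → ℝ be of class C³, where u satisfies u(0,y) = u(L,y) = 0, u_x(L,y) = α u_x(0,y), u_y(x,L) = β u_x(x,L), u_y(x,0) = 0, and v satisfies v(0,y) = v(L,y) = 0, v_x(0,y) = α v_x(L,y), v_y(x,L) = −β v_x(x,L), v_y(x,0) = 0, for all x, y ∈ [0,L]. Then ∫_Ω ( −u_x − u_xxx − ∂ₓ⁻¹ u_yy )(x,y) · v(x,y) dx dy = ∫_Ω u(x,y) · ( v_x + v_xxx + (∂ₓ⁻¹)* v_yy )(x,y) dx dy. -/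

import Mathlib

open MeasureTheory Real intervalIntegral Set

noncomputable section

/-- Partial derivative in `x` of `u(x,y)`. -/
def pdx (u : ℝ → ℝ → ℝ) (x y : ℝ) : ℝ := deriv (fun x' => u x' y) x

/-- Third partial derivative in `x` of `u(x,y)`. -/
def pdx3 (u : ℝ → ℝ → ℝ) (x y : ℝ) : ℝ := iteratedDeriv 3 (fun x' => u x' y) x

/-- Partial derivative in `y` of `u(x,y)`. -/
def pdy (u : ℝ → ℝ → ℝ) (x y : ℝ) : ℝ := deriv (fun y' => u x y') y

/-- Second partial derivative in `y` of `u(x,y)`. -/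
def pdy2 (u : ℝ → ℝ → ℝ) (x y : ℝ) : ℝ := iteratedDeriv 2 (fun y' => u x y') y

/-- The nonlocal operator `(∂ₓ⁻¹ w)(x,y) = -∫ₓ^L w(s,y) ds`. -/
def pxInv (L : ℝ) (w : ℝ → ℝ → ℝ) (x y : ℝ) : ℝ := -(∫ s in x..L, w s y)

/-- The adjoint nonlocal operator `((∂ₓ⁻¹)* w)(x,y) = ∫₀^x w(s,y) ds`. -/
def pxInvStar (w : ℝ → ℝ → ℝ) (x y : ℝ) : ℝ := ∫ s in (0:ℝ)..x, w s y

lemma pdx3_eq (u : ℝ → ℝ → ℝ) (x y : ℝ) : pdx3 u x y = pdx (pdx (pdx u)) x y := by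
  simp [pdx3, pdx, iteratedDeriv_succ, iteratedDeriv_zero]

lemma pdy2_eq (u : ℝ → ℝ → ℝ) (x y : ℝ) : pdy2 u x y = pdy (pdy u) x y := by
  simp [pdy2, pdy, iteratedDeriv_succ, iteratedDeriv_zero]

lemma hasDerivAt_pdx {w : ℝ → ℝ → ℝ} (hw : Differentiable ℝ fun p : ℝ × ℝ => w p.1 p.2)
    (x y : ℝ) : HasDerivAt (fun x' => w x' y) (pdx w x y) x := by
  have h : HasDerivAt (fun x' => w x' y)
      (fderiv ℝ (fun p : ℝ × ℝ => w p.1 p.2) (x, y) (1, 0)) x :=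
    by have h1 := (hasDerivAt_id' x).prodMk (hasDerivAt_const x y); exact (hw (x, y)).hasFDerivAt.comp_hasDerivAt x h1
  simpa only [pdx, h.deriv] using h

lemma hasDerivAt_pdy {w : ℝ → ℝ → ℝ} (hw : Differentiable ℝ fun p : ℝ × ℝ => w p.1 p.2)
    (x y : ℝ) : HasDerivAt (fun y' => w x y') (pdy w x y) y := by
  have h : HasDerivAt (fun y' => w x y')
      (fderiv ℝ (fun p : ℝ × ℝ => w p.1 p.2) (x, y) (0, 1)) y :=
    (hw (x, y)).hasFDerivAt.comp_hasDerivAt y ((hasDerivAt_const y x).prodMk (hasDerivAt_id y))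
  simpa only [pdy, h.deriv] using h

lemma contDiff_pdx {n : ℕ∞} {w : ℝ → ℝ → ℝ}
    (hw : ContDiff ℝ (n + 1) fun p : ℝ × ℝ => w p.1 p.2) :
    ContDiff ℝ n fun p : ℝ × ℝ => pdx w p.1 p.2 := by
  have hd : Differentiable ℝ fun p : ℝ × ℝ => w p.1 p.2 := hw.differentiable (by simp)
  have he : (fun p : ℝ × ℝ => pdx w p.1 p.2)
      = fun p : ℝ × ℝ => fderiv ℝ (fun q : ℝ × ℝ => w q.1 q.2) p (1, 0) := by
    funext p
    simp only [pdx]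
    exact ((hd p).hasFDerivAt.comp_hasDerivAt p.1
      ((hasDerivAt_id' p.1).prodMk (hasDerivAt_const p.1 p.2))).deriv
  rw [he]
  exact (hw.fderiv_right le_rfl).clm_apply contDiff_const

lemma contDiff_pdy {n : ℕ∞} {w : ℝ → ℝ → ℝ}
    (hw : ContDiff ℝ (n + 1) fun p : ℝ × ℝ => w p.1 p.2) :
    ContDiff ℝ n fun p : ℝ × ℝ => pdy w p.1 p.2 := by
  have hd : Differentiable ℝ fun p : ℝ × ℝ => w p.1 p.2 := hw.differentiable (by simp)
  have he : (fun p : ℝ × ℝ => pdy w p.1 p.2)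
      = fun p : ℝ × ℝ => fderiv ℝ (fun q : ℝ × ℝ => w q.1 q.2) p (0, 1) := by
    funext p
    simp only [pdy]
    exact ((hd p).hasFDerivAt.comp_hasDerivAt p.2
      ((hasDerivAt_const p.2 p.1).prodMk (hasDerivAt_id p.2))).deriv
  rw [he]
  exact (hw.fderiv_right le_rfl).clm_apply contDiff_const

lemma swap_core {f : ℝ → ℝ → ℝ} (hf : Continuous fun p : ℝ × ℝ => f p.1 p.2)
    {a b c d : ℝ} (hab : a ≤ b) (hcd : c ≤ d) :
    ∫ x in a..b, ∫ y in c..d, f x y = ∫ y in c..d, ∫ x in a..b, f x y := by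
  have hint : Integrable (Function.uncurry f)
      ((volume.restrict (Ioc a b)).prod (volume.restrict (Ioc c d))) := by
    rw [Measure.prod_restrict]
    have : IntegrableOn (Function.uncurry f) (Icc a b ×ˢ Icc c d) volume :=
      hf.continuousOn.integrableOn_compact (isCompact_Icc.prod isCompact_Icc)
    exact this.mono_set (Set.prod_mono Ioc_subset_Icc_self Ioc_subset_Icc_self)
  rw [intervalIntegral.integral_of_le hab, intervalIntegral.integral_of_le hcd]
  simp_rw [intervalIntegral.integral_of_le hab, intervalIntegral.integral_of_le hcd]
  exact MeasureTheory.integral_integral_swap hint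

lemma swap_gen {f : ℝ → ℝ → ℝ} (hf : Continuous fun p : ℝ × ℝ => f p.1 p.2)
    (a b c d : ℝ) :
    ∫ x in a..b, ∫ y in c..d, f x y = ∫ y in c..d, ∫ x in a..b, f x y := by
  rcases le_total a b with hab | hab <;> rcases le_total c d with hcd | hcd
  · exact swap_core hf hab hcd
  · simp_rw [intervalIntegral.integral_symm d c]
    rw [intervalIntegral.integral_neg, swap_core hf hab hcd]
  · simp_rw [intervalIntegral.integral_symm b a]
    rw [intervalIntegral.integral_neg, swap_core hf hab hcd]
  · simp_rw [intervalIntegral.integral_symm b a, intervalIntegral.integral_symm d c]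
    rw [intervalIntegral.integral_neg, intervalIntegral.integral_neg,
      swap_core hf hab hcd]

lemma cont_prim {g : ℝ → ℝ → ℝ} (hg : Continuous fun p : ℝ × ℝ => g p.1 p.2) :
    Continuous fun p : ℝ × ℝ => ∫ s in (0:ℝ)..p.1, g s p.2 := by
  apply continuous_parametric_intervalIntegral_of_continuous
      (f := fun (p : ℝ × ℝ) s => g s p.2) (s := fun p : ℝ × ℝ => p.1)
  · exact hg.comp (continuous_snd.prodMk continuous_fst.snd)
  · exact continuous_fst

lemma cont_param {g : ℝ → ℝ → ℝ} (hg : Continuous fun p : ℝ × ℝ => g p.1 p.2) (a b : ℝ) :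
    Continuous fun y : ℝ => ∫ s in a..b, g s y := by
  apply continuous_parametric_intervalIntegral_of_continuous' (f := fun y s => g s y)
  exact hg.comp (continuous_snd.prodMk continuous_fst)

lemma cont_param' {g : ℝ → ℝ → ℝ} (hg : Continuous fun p : ℝ × ℝ => g p.1 p.2) (a b : ℝ) :
    Continuous fun x : ℝ => ∫ y in a..b, g x y := by
  apply continuous_parametric_intervalIntegral_of_continuous' (f := fun x y => g x y)
  exact hg

lemma prim_hasDerivAt {g : ℝ → ℝ} (hg : Continuous g) (a x : ℝ) :
    HasDerivAt (fun t => ∫ s in a..t, g s) (g x) x :=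
  intervalIntegral.integral_hasDerivAt_right (hg.intervalIntegrable _ _)
    (hg.stronglyMeasurableAtFilter _ _) hg.continuousAt

lemma param_hasDerivAt {g : ℝ → ℝ → ℝ}
    (hg : Continuous fun p : ℝ × ℝ => g p.1 p.2)
    (hg' : Continuous fun p : ℝ × ℝ => pdy g p.1 p.2)
    (hd : Differentiable ℝ fun p : ℝ × ℝ => g p.1 p.2)
    (x y : ℝ) :
    HasDerivAt (fun t => ∫ s in (0:ℝ)..x, g s t) (∫ s in (0:ℝ)..x, pdy g s y) y := by
  have hcont : Continuous fun t => ∫ s in (0:ℝ)..x, pdy g s t := cont_param hg' 0 x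
  have hrep : (fun t : ℝ => ∫ s in (0:ℝ)..x, g s t)
      = fun t => (∫ s in (0:ℝ)..x, g s 0)
          + ∫ t' in (0:ℝ)..t, ∫ s in (0:ℝ)..x, pdy g s t' := by
    funext t
    have h1 : ∀ s : ℝ, g s t = g s 0 + ∫ t' in (0:ℝ)..t, pdy g s t' := by
      intro s
      have hI : (∫ t' in (0:ℝ)..t, pdy g s t') = g s t - g s 0 :=
        intervalIntegral.integral_eq_sub_of_hasDerivAt
          (fun t' _ => hasDerivAt_pdy hd s t')
          ((hg'.comp (continuous_const.prodMk continuous_id)).intervalIntegrable _ _)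
      rw [hI]; ring
    calc (∫ s in (0:ℝ)..x, g s t)
        = ∫ s in (0:ℝ)..x, (g s 0 + ∫ t' in (0:ℝ)..t, pdy g s t') :=
          intervalIntegral.integral_congr (fun s _ => h1 s)
      _ = (∫ s in (0:ℝ)..x, g s 0)
            + ∫ s in (0:ℝ)..x, ∫ t' in (0:ℝ)..t, pdy g s t' := by
          apply intervalIntegral.integral_add
          · exact ((hg.comp (continuous_id.prodMk continuous_const)).intervalIntegrable _ _)
          · exact (cont_param' hg' 0 t).intervalIntegrable _ _
      _ = _ := by rw [swap_gen hg' 0 x 0 t]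
  rw [hrep]
  exact (prim_hasDerivAt hcont 0 y).const_add _

lemma cont_param_snd {g : ℝ → ℝ → ℝ} (hg : Continuous fun p : ℝ × ℝ => g p.1 p.2)
    (a b : ℝ) : Continuous fun p : ℝ × ℝ => ∫ s in a..b, g s p.2 := by
  apply continuous_parametric_intervalIntegral_of_continuous
      (f := fun (p : ℝ × ℝ) s => g s p.2) (s := fun _ : ℝ × ℝ => b) (a₀ := a)
  · exact hg.comp (continuous_snd.prodMk continuous_fst.snd)
  · exact continuous_const

lemma cont_prim' {g : ℝ → ℝ → ℝ} (hg : Continuous fun p : ℝ × ℝ => g p.1 p.2) (b : ℝ) :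
    Continuous fun p : ℝ × ℝ => ∫ s in p.1..b, g s p.2 := by
  have he : (fun p : ℝ × ℝ => ∫ s in p.1..b, g s p.2)
      = fun p : ℝ × ℝ => (∫ s in (0:ℝ)..b, g s p.2) - ∫ s in (0:ℝ)..p.1, g s p.2 := by
    funext p
    exact (intervalIntegral.integral_interval_sub_left
      (((hg.comp (continuous_id.prodMk continuous_const)).intervalIntegrable _ _))
      (((hg.comp (continuous_id.prodMk continuous_const)).intervalIntegrable _ _))).symm
  rw [he]
  exact (cont_param_snd hg 0 b).sub (cont_prim hg)

lemma prim_hasDerivAt' {g : ℝ → ℝ} (hg : Continuous g) (b x : ℝ) :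
    HasDerivAt (fun t => ∫ s in t..b, g s) (-(g x)) x := by
  have he : (fun t : ℝ => ∫ s in t..b, g s)
      = fun t => (∫ s in (0:ℝ)..b, g s) - ∫ s in (0:ℝ)..t, g s := by
    funext t
    exact (intervalIntegral.integral_interval_sub_left
      (hg.intervalIntegrable _ _) (hg.intervalIntegrable _ _)).symm
  rw [he]
  exact (prim_hasDerivAt hg 0 x).const_sub _

set_option maxHeartbeats 1000000 in
/-- Adjointness identity: `⟨Au, v⟩ = ⟨u, A*v⟩` for the linearized KP-II operator
`A u = -u_x - u_xxx - ∂ₓ⁻¹ u_yy` with the closed-loop boundary conditions and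
`A* v = v_x + v_xxx + (∂ₓ⁻¹)* v_yy` with the adjoint boundary conditions. -/
theorem kp_adjoint_identity (L α β : ℝ) (hL : 0 < L)
    (hα0 : 0 < |α|) (hα1 : |α| < 1) (hβ : 0 < β)
    (u v : ℝ → ℝ → ℝ)
    (hu : ContDiff ℝ 3 (fun p : ℝ × ℝ => u p.1 p.2))
    (hv : ContDiff ℝ 3 (fun p : ℝ × ℝ => v p.1 p.2))
    (hubx : ∀ y ∈ Set.Icc (0:ℝ) L, u 0 y = 0 ∧ u L y = 0 ∧ pdx u L y = α * pdx u 0 y)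
    (huby : ∀ x ∈ Set.Icc (0:ℝ) L, pdy u x L = β * pdx u x L ∧ pdy u x 0 = 0)
    (hvbx : ∀ y ∈ Set.Icc (0:ℝ) L, v 0 y = 0 ∧ v L y = 0 ∧ pdx v 0 y = α * pdx v L y)
    (hvby : ∀ x ∈ Set.Icc (0:ℝ) L, pdy v x L = -β * pdx v x L ∧ pdy v x 0 = 0) :
    (∫ x in (0:ℝ)..L, ∫ y in (0:ℝ)..L,
        (-(pdx u x y) - pdx3 u x y - pxInv L (pdy2 u) x y) * v x y)
      = ∫ x in (0:ℝ)..L, ∫ y in (0:ℝ)..L,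
          u x y * (pdx v x y + pdx3 v x y + pxInvStar (pdy2 v) x y) := by
  -- regularity of u
  have hu2x : ContDiff ℝ 2 fun p : ℝ × ℝ => pdx u p.1 p.2 :=
    contDiff_pdx (by exact_mod_cast hu)
  have hu1xx : ContDiff ℝ 1 fun p : ℝ × ℝ => pdx (pdx u) p.1 p.2 :=
    contDiff_pdx (by exact_mod_cast hu2x)
  have hu0xxx : ContDiff ℝ 0 fun p : ℝ × ℝ => pdx (pdx (pdx u)) p.1 p.2 :=
    contDiff_pdx (by exact_mod_cast hu1xx)
  have hu2y : ContDiff ℝ 2 fun p : ℝ × ℝ => pdy u p.1 p.2 :=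
    contDiff_pdy (by exact_mod_cast hu)
  have hu1yy : ContDiff ℝ 1 fun p : ℝ × ℝ => pdy (pdy u) p.1 p.2 :=
    contDiff_pdy (by exact_mod_cast hu2y)
  -- regularity of v
  have hv2x : ContDiff ℝ 2 fun p : ℝ × ℝ => pdx v p.1 p.2 :=
    contDiff_pdx (by exact_mod_cast hv)
  have hv1xx : ContDiff ℝ 1 fun p : ℝ × ℝ => pdx (pdx v) p.1 p.2 :=
    contDiff_pdx (by exact_mod_cast hv2x)
  have hv0xxx : ContDiff ℝ 0 fun p : ℝ × ℝ => pdx (pdx (pdx v)) p.1 p.2 :=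
    contDiff_pdx (by exact_mod_cast hv1xx)
  have hv2y : ContDiff ℝ 2 fun p : ℝ × ℝ => pdy v p.1 p.2 :=
    contDiff_pdy (by exact_mod_cast hv)
  have hv1yy : ContDiff ℝ 1 fun p : ℝ × ℝ => pdy (pdy v) p.1 p.2 :=
    contDiff_pdy (by exact_mod_cast hv2y)
  -- continuity
  have cu : Continuous fun p : ℝ × ℝ => u p.1 p.2 := hu.continuous
  have cv : Continuous fun p : ℝ × ℝ => v p.1 p.2 := hv.continuous
  have cux := hu2x.continuous
  have cuxx := hu1xx.continuous
  have cuxxx := hu0xxx.continuous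
  have cuy := hu2y.continuous
  have cuyy := hu1yy.continuous
  have cvx := hv2x.continuous
  have cvxx := hv1xx.continuous
  have cvxxx := hv0xxx.continuous
  have cvy := hv2y.continuous
  have cvyy := hv1yy.continuous
  -- differentiability
  have du : Differentiable ℝ fun p : ℝ × ℝ => u p.1 p.2 := hu.differentiable (by norm_num)
  have dux : Differentiable ℝ fun p : ℝ × ℝ => pdx u p.1 p.2 :=
    hu2x.differentiable two_ne_zero
  have duxx : Differentiable ℝ fun p : ℝ × ℝ => pdx (pdx u) p.1 p.2 :=
    hu1xx.differentiable one_ne_zero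
  have duy : Differentiable ℝ fun p : ℝ × ℝ => pdy u p.1 p.2 :=
    hu2y.differentiable two_ne_zero
  have dv : Differentiable ℝ fun p : ℝ × ℝ => v p.1 p.2 := hv.differentiable (by norm_num)
  have dvx : Differentiable ℝ fun p : ℝ × ℝ => pdx v p.1 p.2 :=
    hv2x.differentiable two_ne_zero
  have dvxx : Differentiable ℝ fun p : ℝ × ℝ => pdx (pdx v) p.1 p.2 :=
    hv1xx.differentiable one_ne_zero
  have dvy : Differentiable ℝ fun p : ℝ × ℝ => pdy v p.1 p.2 :=
    hv2y.differentiable two_ne_zero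
  -- slices
  have sl1 : ∀ (w : ℝ → ℝ → ℝ), (Continuous fun p : ℝ × ℝ => w p.1 p.2) →
      ∀ y : ℝ, Continuous fun x => w x y :=
    fun w hw y => hw.comp (continuous_id.prodMk continuous_const)
  have sl2 : ∀ (w : ℝ → ℝ → ℝ), (Continuous fun p : ℝ × ℝ => w p.1 p.2) →
      ∀ x : ℝ, Continuous fun y => w x y :=
    fun w hw x => hw.comp (continuous_const.prodMk continuous_id)
  simp_rw [pxInv, pxInvStar, pdx3_eq, pdy2_eq]
  -- the three key identities
  have key1 : (∫ x in (0:ℝ)..L, ∫ y in (0:ℝ)..L, pdx u x y * v x y)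
      = -∫ x in (0:ℝ)..L, ∫ y in (0:ℝ)..L, u x y * pdx v x y := by
    have c1 : Continuous fun p : ℝ × ℝ => pdx u p.1 p.2 * v p.1 p.2 := cux.mul cv
    have c2 : Continuous fun p : ℝ × ℝ => u p.1 p.2 * pdx v p.1 p.2 := cu.mul cvx
    conv_lhs => rw [swap_gen c1 0 L 0 L]
    conv_rhs => rw [swap_gen c2 0 L 0 L]
    rw [← intervalIntegral.integral_neg]
    apply intervalIntegral.integral_congr
    intro y hy
    rw [Set.uIcc_of_le hL.le] at hy
    obtain ⟨hu0, huL, -⟩ := hubx y hy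
    have E : (∫ x in (0:ℝ)..L, v x y * pdx u x y)
        = v L y * u L y - v 0 y * u 0 y - ∫ x in (0:ℝ)..L, pdx v x y * u x y :=
      intervalIntegral.integral_mul_deriv_eq_deriv_mul
        (fun x _ => hasDerivAt_pdx dv x y) (fun x _ => hasDerivAt_pdx du x y)
        ((sl1 _ cvx y).intervalIntegrable _ _) ((sl1 _ cux y).intervalIntegrable _ _)
    calc (∫ x in (0:ℝ)..L, pdx u x y * v x y)
        = ∫ x in (0:ℝ)..L, v x y * pdx u x y :=
          intervalIntegral.integral_congr (fun x _ => mul_comm _ _)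
      _ = -(∫ x in (0:ℝ)..L, pdx v x y * u x y) := by rw [E, hu0, huL]; ring
      _ = -∫ x in (0:ℝ)..L, u x y * pdx v x y := by
          rw [intervalIntegral.integral_congr
            (g := fun x => u x y * pdx v x y) (fun x _ => mul_comm _ _)]
  have key2 : (∫ x in (0:ℝ)..L, ∫ y in (0:ℝ)..L, pdx (pdx (pdx u)) x y * v x y)
      = -∫ x in (0:ℝ)..L, ∫ y in (0:ℝ)..L, u x y * pdx (pdx (pdx v)) x y := by
    have c1 : Continuous fun p : ℝ × ℝ => pdx (pdx (pdx u)) p.1 p.2 * v p.1 p.2 :=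
      cuxxx.mul cv
    have c2 : Continuous fun p : ℝ × ℝ => u p.1 p.2 * pdx (pdx (pdx v)) p.1 p.2 :=
      cu.mul cvxxx
    conv_lhs => rw [swap_gen c1 0 L 0 L]
    conv_rhs => rw [swap_gen c2 0 L 0 L]
    rw [← intervalIntegral.integral_neg]
    apply intervalIntegral.integral_congr
    intro y hy
    rw [Set.uIcc_of_le hL.le] at hy
    obtain ⟨hu0, huL, huα⟩ := hubx y hy
    obtain ⟨hv0, hvL, hvα⟩ := hvbx y hy
    have E1 : (∫ x in (0:ℝ)..L, v x y * pdx (pdx (pdx u)) x y)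
        = v L y * pdx (pdx u) L y - v 0 y * pdx (pdx u) 0 y
          - ∫ x in (0:ℝ)..L, pdx v x y * pdx (pdx u) x y :=
      intervalIntegral.integral_mul_deriv_eq_deriv_mul
        (fun x _ => hasDerivAt_pdx dv x y) (fun x _ => hasDerivAt_pdx duxx x y)
        ((sl1 _ cvx y).intervalIntegrable _ _) ((sl1 _ cuxxx y).intervalIntegrable _ _)
    have E2 : (∫ x in (0:ℝ)..L, pdx v x y * pdx (pdx u) x y)
        = pdx v L y * pdx u L y - pdx v 0 y * pdx u 0 y
          - ∫ x in (0:ℝ)..L, pdx (pdx v) x y * pdx u x y :=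
      intervalIntegral.integral_mul_deriv_eq_deriv_mul
        (fun x _ => hasDerivAt_pdx dvx x y) (fun x _ => hasDerivAt_pdx dux x y)
        ((sl1 _ cvxx y).intervalIntegrable _ _) ((sl1 _ cuxx y).intervalIntegrable _ _)
    have E3 : (∫ x in (0:ℝ)..L, pdx (pdx v) x y * pdx u x y)
        = pdx (pdx v) L y * u L y - pdx (pdx v) 0 y * u 0 y
          - ∫ x in (0:ℝ)..L, pdx (pdx (pdx v)) x y * u x y :=
      intervalIntegral.integral_mul_deriv_eq_deriv_mul
        (fun x _ => hasDerivAt_pdx dvxx x y) (fun x _ => hasDerivAt_pdx du x y)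
        ((sl1 _ cvxxx y).intervalIntegrable _ _) ((sl1 _ cux y).intervalIntegrable _ _)
    calc (∫ x in (0:ℝ)..L, pdx (pdx (pdx u)) x y * v x y)
        = ∫ x in (0:ℝ)..L, v x y * pdx (pdx (pdx u)) x y :=
          intervalIntegral.integral_congr (fun x _ => mul_comm _ _)
      _ = -(∫ x in (0:ℝ)..L, pdx v x y * pdx (pdx u) x y) := by rw [E1, hv0, hvL]; ring
      _ = ∫ x in (0:ℝ)..L, pdx (pdx v) x y * pdx u x y := by rw [E2, huα, hvα]; ring
      _ = -(∫ x in (0:ℝ)..L, pdx (pdx (pdx v)) x y * u x y) := by rw [E3, hu0, huL]; ring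
      _ = -∫ x in (0:ℝ)..L, u x y * pdx (pdx (pdx v)) x y := by
          rw [intervalIntegral.integral_congr
            (g := fun x => u x y * pdx (pdx (pdx v)) x y) (fun x _ => mul_comm _ _)]
  have key3 : (∫ x in (0:ℝ)..L, ∫ y in (0:ℝ)..L,
        (∫ s in x..L, pdy (pdy u) s y) * v x y)
      = ∫ x in (0:ℝ)..L, ∫ y in (0:ℝ)..L,
          u x y * ∫ s in (0:ℝ)..x, pdy (pdy v) s y := by
    have cW : Continuous fun p : ℝ × ℝ => (∫ s in p.1..L, pdy (pdy u) s p.2) * v p.1 p.2 :=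
      (cont_prim' cuyy L).mul cv
    have cM : Continuous fun p : ℝ × ℝ => pdy (pdy u) p.1 p.2 * ∫ s in (0:ℝ)..p.1, v s p.2 :=
      cuyy.mul (cont_prim cv)
    have step1 : (∫ x in (0:ℝ)..L, ∫ y in (0:ℝ)..L, (∫ s in x..L, pdy (pdy u) s y) * v x y)
        = ∫ x in (0:ℝ)..L, ∫ y in (0:ℝ)..L, pdy (pdy u) x y * ∫ s in (0:ℝ)..x, v s y := by
      conv_lhs => rw [swap_gen cW 0 L 0 L]
      conv_rhs => rw [swap_gen cM 0 L 0 L]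
      apply intervalIntegral.integral_congr
      intro y _
      show (∫ x in (0:ℝ)..L, (∫ s in x..L, pdy (pdy u) s y) * v x y)
          = ∫ x in (0:ℝ)..L, pdy (pdy u) x y * ∫ s in (0:ℝ)..x, v s y
      have E : (∫ x in (0:ℝ)..L, (∫ s in x..L, pdy (pdy u) s y) * v x y)
          = (∫ s in L..L, pdy (pdy u) s y) * (∫ s in (0:ℝ)..L, v s y)
            - (∫ s in (0:ℝ)..L, pdy (pdy u) s y) * (∫ s in (0:ℝ)..(0:ℝ), v s y)
            - ∫ x in (0:ℝ)..L, (-(pdy (pdy u) x y)) * ∫ s in (0:ℝ)..x, v s y :=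
        intervalIntegral.integral_mul_deriv_eq_deriv_mul
          (fun x _ => prim_hasDerivAt' (sl1 _ cuyy y) L x)
          (fun x _ => prim_hasDerivAt (sl1 _ cv y) 0 x)
          (((sl1 _ cuyy y).neg).intervalIntegrable _ _)
          ((sl1 _ cv y).intervalIntegrable _ _)
      have hneg : (∫ x in (0:ℝ)..L, (-(pdy (pdy u) x y)) * ∫ s in (0:ℝ)..x, v s y)
          = -∫ x in (0:ℝ)..L, pdy (pdy u) x y * ∫ s in (0:ℝ)..x, v s y := by
        rw [← intervalIntegral.integral_neg]
        exact intervalIntegral.integral_congr (fun x _ => by ring)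
      rw [E, intervalIntegral.integral_same, intervalIntegral.integral_same, hneg]
      ring
    rw [step1]
    have step2 : ∀ x ∈ Set.Icc (0:ℝ) L,
        (∫ y in (0:ℝ)..L, pdy (pdy u) x y * ∫ s in (0:ℝ)..x, v s y)
        = β * (pdx u x L * (∫ s in (0:ℝ)..x, v s L) + u x L * v x L)
          + ∫ y in (0:ℝ)..L, u x y * ∫ s in (0:ℝ)..x, pdy (pdy v) s y := by
      intro x hx
      obtain ⟨huyL, huy0⟩ := huby x hx
      have hQ'0 : (∫ s in (0:ℝ)..x, pdy v s 0) = 0 := by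
        have hEq : Set.EqOn (fun s => pdy v s 0) (fun _ => (0:ℝ)) (Set.uIcc 0 x) := by
          intro s hs
          rw [Set.uIcc_of_le hx.1] at hs
          exact (hvby s ⟨hs.1, hs.2.trans hx.2⟩).2
        rw [intervalIntegral.integral_congr hEq]
        simp
      have hQ'L : (∫ s in (0:ℝ)..x, pdy v s L) = -(β * v x L) := by
        have hEq : Set.EqOn (fun s => pdy v s L) (fun s => -β * pdx v s L) (Set.uIcc 0 x) := by
          intro s hs
          rw [Set.uIcc_of_le hx.1] at hs
          exact (hvby s ⟨hs.1, hs.2.trans hx.2⟩).1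
        rw [intervalIntegral.integral_congr hEq, intervalIntegral.integral_const_mul]
        have hftc : (∫ s in (0:ℝ)..x, pdx v s L) = v x L - v 0 L :=
          intervalIntegral.integral_eq_sub_of_hasDerivAt
            (fun s _ => hasDerivAt_pdx dv s L) ((sl1 _ cvx L).intervalIntegrable _ _)
        rw [hftc, (hvbx L ⟨hL.le, le_rfl⟩).1]
        ring
      have E1 : (∫ t in (0:ℝ)..L, (∫ s in (0:ℝ)..x, v s t) * pdy (pdy u) x t)
          = (∫ s in (0:ℝ)..x, v s L) * pdy u x L - (∫ s in (0:ℝ)..x, v s 0) * pdy u x 0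
            - ∫ t in (0:ℝ)..L, (∫ s in (0:ℝ)..x, pdy v s t) * pdy u x t :=
        intervalIntegral.integral_mul_deriv_eq_deriv_mul
          (fun t _ => param_hasDerivAt cv cvy dv x t)
          (fun t _ => hasDerivAt_pdy duy x t)
          ((cont_param cvy 0 x).intervalIntegrable _ _)
          ((sl2 _ cuyy x).intervalIntegrable _ _)
      have E2 : (∫ t in (0:ℝ)..L, (∫ s in (0:ℝ)..x, pdy v s t) * pdy u x t)
          = (∫ s in (0:ℝ)..x, pdy v s L) * u x L - (∫ s in (0:ℝ)..x, pdy v s 0) * u x 0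
            - ∫ t in (0:ℝ)..L, (∫ s in (0:ℝ)..x, pdy (pdy v) s t) * u x t :=
        intervalIntegral.integral_mul_deriv_eq_deriv_mul
          (fun t _ => param_hasDerivAt cvy cvyy dvy x t)
          (fun t _ => hasDerivAt_pdy du x t)
          ((cont_param cvyy 0 x).intervalIntegrable _ _)
          ((sl2 _ cuy x).intervalIntegrable _ _)
      calc (∫ y in (0:ℝ)..L, pdy (pdy u) x y * ∫ s in (0:ℝ)..x, v s y)
          = ∫ t in (0:ℝ)..L, (∫ s in (0:ℝ)..x, v s t) * pdy (pdy u) x t :=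
            intervalIntegral.integral_congr (fun t _ => mul_comm _ _)
        _ = _ := by
            rw [E1, E2, hQ'0, hQ'L, huyL, huy0]
            have hcm : (∫ t in (0:ℝ)..L, (∫ s in (0:ℝ)..x, pdy (pdy v) s t) * u x t)
                = ∫ y in (0:ℝ)..L, u x y * ∫ s in (0:ℝ)..x, pdy (pdy v) s y :=
              intervalIntegral.integral_congr (fun t _ => mul_comm _ _)
            rw [hcm]
            ring
    have hprimc : Continuous fun x : ℝ => ∫ s in (0:ℝ)..x, v s L :=
      intervalIntegral.continuous_primitive
        (fun a b => (sl1 _ cv L).intervalIntegrable a b) 0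
    have hBc : Continuous fun x : ℝ =>
        β * (pdx u x L * (∫ s in (0:ℝ)..x, v s L) + u x L * v x L) :=
      continuous_const.mul (((sl1 _ cux L).mul hprimc).add
        ((sl1 _ cu L).mul (sl1 _ cv L)))
    have hGc : Continuous fun x : ℝ =>
        ∫ y in (0:ℝ)..L, u x y * ∫ s in (0:ℝ)..x, pdy (pdy v) s y :=
      cont_param' (cu.mul (cont_prim cvyy)) 0 L
    have houter : (∫ x in (0:ℝ)..L, ∫ y in (0:ℝ)..L,
          pdy (pdy u) x y * ∫ s in (0:ℝ)..x, v s y)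
        = ∫ x in (0:ℝ)..L, (β * (pdx u x L * (∫ s in (0:ℝ)..x, v s L) + u x L * v x L)
            + ∫ y in (0:ℝ)..L, u x y * ∫ s in (0:ℝ)..x, pdy (pdy v) s y) := by
      apply intervalIntegral.integral_congr
      intro x hx
      rw [Set.uIcc_of_le hL.le] at hx
      exact step2 x hx
    rw [houter, intervalIntegral.integral_add (hBc.intervalIntegrable _ _)
      (hGc.intervalIntegrable _ _)]
    have hB0 : (∫ x in (0:ℝ)..L,
        β * (pdx u x L * (∫ s in (0:ℝ)..x, v s L) + u x L * v x L)) = 0 := by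
      have hder : ∀ x ∈ Set.uIcc (0:ℝ) L,
          HasDerivAt (fun t => β * (u t L * ∫ s in (0:ℝ)..t, v s L))
            (β * (pdx u x L * (∫ s in (0:ℝ)..x, v s L) + u x L * v x L)) x := fun x _ =>
        ((hasDerivAt_pdx du x L).mul (prim_hasDerivAt (sl1 _ cv L) 0 x)).const_mul β
      rw [intervalIntegral.integral_eq_sub_of_hasDerivAt hder (hBc.intervalIntegrable _ _),
        (hubx L ⟨hL.le, le_rfl⟩).2.1, intervalIntegral.integral_same]
      ring
    rw [hB0, zero_add]
  -- split the left-hand side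
  have hsplitL : (∫ x in (0:ℝ)..L, ∫ y in (0:ℝ)..L,
        (-(pdx u x y) - pdx (pdx (pdx u)) x y - -(∫ s in x..L, pdy (pdy u) s y)) * v x y)
      = -(∫ x in (0:ℝ)..L, ∫ y in (0:ℝ)..L, pdx u x y * v x y)
        - (∫ x in (0:ℝ)..L, ∫ y in (0:ℝ)..L, pdx (pdx (pdx u)) x y * v x y)
        + ∫ x in (0:ℝ)..L, ∫ y in (0:ℝ)..L, (∫ s in x..L, pdy (pdy u) s y) * v x y := by
    have innerL : ∀ x : ℝ, (∫ y in (0:ℝ)..L,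
          (-(pdx u x y) - pdx (pdx (pdx u)) x y - -(∫ s in x..L, pdy (pdy u) s y)) * v x y)
        = -(∫ y in (0:ℝ)..L, pdx u x y * v x y)
          - (∫ y in (0:ℝ)..L, pdx (pdx (pdx u)) x y * v x y)
          + ∫ y in (0:ℝ)..L, (∫ s in x..L, pdy (pdy u) s y) * v x y := by
      intro x
      have h1 : IntervalIntegrable (fun y => pdx u x y * v x y) volume 0 L :=
        ((sl2 _ cux x).mul (sl2 _ cv x)).intervalIntegrable _ _
      have h2 : IntervalIntegrable (fun y => pdx (pdx (pdx u)) x y * v x y) volume 0 L :=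
        ((sl2 _ cuxxx x).mul (sl2 _ cv x)).intervalIntegrable _ _
      have h3 : IntervalIntegrable
          (fun y => (∫ s in x..L, pdy (pdy u) s y) * v x y) volume 0 L :=
        ((cont_param cuyy x L).mul (sl2 _ cv x)).intervalIntegrable _ _
      calc (∫ y in (0:ℝ)..L,
            (-(pdx u x y) - pdx (pdx (pdx u)) x y - -(∫ s in x..L, pdy (pdy u) s y)) * v x y)
          = ∫ y in (0:ℝ)..L,
              (-(pdx u x y * v x y) - pdx (pdx (pdx u)) x y * v x y
                + (∫ s in x..L, pdy (pdy u) s y) * v x y) :=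
            intervalIntegral.integral_congr (fun y _ => by ring)
        _ = _ := by
            have h1n : IntervalIntegrable (fun y => -(pdx u x y * v x y)) volume 0 L := h1.neg
            rw [intervalIntegral.integral_add (h1n.sub h2) h3,
              intervalIntegral.integral_sub h1n h2, intervalIntegral.integral_neg]
    calc (∫ x in (0:ℝ)..L, ∫ y in (0:ℝ)..L,
          (-(pdx u x y) - pdx (pdx (pdx u)) x y - -(∫ s in x..L, pdy (pdy u) s y)) * v x y)
        = ∫ x in (0:ℝ)..L,
            (-(∫ y in (0:ℝ)..L, pdx u x y * v x y)
              - (∫ y in (0:ℝ)..L, pdx (pdx (pdx u)) x y * v x y)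
              + ∫ y in (0:ℝ)..L, (∫ s in x..L, pdy (pdy u) s y) * v x y) :=
          intervalIntegral.integral_congr (fun x _ => innerL x)
      _ = _ := by
          have hA : IntervalIntegrable
              (fun x => ∫ y in (0:ℝ)..L, pdx u x y * v x y) volume 0 L :=
            (cont_param' (cux.mul cv) 0 L).intervalIntegrable _ _
          have hB : IntervalIntegrable
              (fun x => ∫ y in (0:ℝ)..L, pdx (pdx (pdx u)) x y * v x y) volume 0 L :=
            (cont_param' (cuxxx.mul cv) 0 L).intervalIntegrable _ _
          have hC : IntervalIntegrable
              (fun x => ∫ y in (0:ℝ)..L, (∫ s in x..L, pdy (pdy u) s y) * v x y) volume 0 L :=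
            (cont_param' ((cont_prim' cuyy L).mul cv) 0 L).intervalIntegrable _ _
          have hAn : IntervalIntegrable
              (fun x => -(∫ y in (0:ℝ)..L, pdx u x y * v x y)) volume 0 L := hA.neg
          rw [intervalIntegral.integral_add (hAn.sub hB) hC,
            intervalIntegral.integral_sub hAn hB, intervalIntegral.integral_neg]
  -- split the right-hand side
  have hsplitR : (∫ x in (0:ℝ)..L, ∫ y in (0:ℝ)..L,
        u x y * (pdx v x y + pdx (pdx (pdx v)) x y + ∫ s in (0:ℝ)..x, pdy (pdy v) s y))
      = (∫ x in (0:ℝ)..L, ∫ y in (0:ℝ)..L, u x y * pdx v x y)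
        + (∫ x in (0:ℝ)..L, ∫ y in (0:ℝ)..L, u x y * pdx (pdx (pdx v)) x y)
        + ∫ x in (0:ℝ)..L, ∫ y in (0:ℝ)..L, u x y * ∫ s in (0:ℝ)..x, pdy (pdy v) s y := by
    have innerR : ∀ x : ℝ, (∫ y in (0:ℝ)..L,
          u x y * (pdx v x y + pdx (pdx (pdx v)) x y + ∫ s in (0:ℝ)..x, pdy (pdy v) s y))
        = (∫ y in (0:ℝ)..L, u x y * pdx v x y)
          + (∫ y in (0:ℝ)..L, u x y * pdx (pdx (pdx v)) x y)
          + ∫ y in (0:ℝ)..L, u x y * ∫ s in (0:ℝ)..x, pdy (pdy v) s y := by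
      intro x
      have h1 : IntervalIntegrable (fun y => u x y * pdx v x y) volume 0 L :=
        ((sl2 _ cu x).mul (sl2 _ cvx x)).intervalIntegrable _ _
      have h2 : IntervalIntegrable (fun y => u x y * pdx (pdx (pdx v)) x y) volume 0 L :=
        ((sl2 _ cu x).mul (sl2 _ cvxxx x)).intervalIntegrable _ _
      have h3 : IntervalIntegrable
          (fun y => u x y * ∫ s in (0:ℝ)..x, pdy (pdy v) s y) volume 0 L :=
        ((sl2 _ cu x).mul (cont_param cvyy 0 x)).intervalIntegrable _ _
      calc (∫ y in (0:ℝ)..L,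
            u x y * (pdx v x y + pdx (pdx (pdx v)) x y + ∫ s in (0:ℝ)..x, pdy (pdy v) s y))
          = ∫ y in (0:ℝ)..L,
              (u x y * pdx v x y + u x y * pdx (pdx (pdx v)) x y
                + u x y * ∫ s in (0:ℝ)..x, pdy (pdy v) s y) :=
            intervalIntegral.integral_congr (fun y _ => by ring)
        _ = _ := by
            rw [intervalIntegral.integral_add (h1.add h2) h3,
              intervalIntegral.integral_add h1 h2]
    calc (∫ x in (0:ℝ)..L, ∫ y in (0:ℝ)..L,
          u x y * (pdx v x y + pdx (pdx (pdx v)) x y + ∫ s in (0:ℝ)..x, pdy (pdy v) s y))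
        = ∫ x in (0:ℝ)..L,
            ((∫ y in (0:ℝ)..L, u x y * pdx v x y)
              + (∫ y in (0:ℝ)..L, u x y * pdx (pdx (pdx v)) x y)
              + ∫ y in (0:ℝ)..L, u x y * ∫ s in (0:ℝ)..x, pdy (pdy v) s y) :=
          intervalIntegral.integral_congr (fun x _ => innerR x)
      _ = _ := by
          have hA : IntervalIntegrable
              (fun x => ∫ y in (0:ℝ)..L, u x y * pdx v x y) volume 0 L :=
            (cont_param' (cu.mul cvx) 0 L).intervalIntegrable _ _
          have hB : IntervalIntegrable
              (fun x => ∫ y in (0:ℝ)..L, u x y * pdx (pdx (pdx v)) x y) volume 0 L :=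
            (cont_param' (cu.mul cvxxx) 0 L).intervalIntegrable _ _
          have hC : IntervalIntegrable
              (fun x => ∫ y in (0:ℝ)..L, u x y * ∫ s in (0:ℝ)..x, pdy (pdy v) s y)
              volume 0 L :=
            (cont_param' (cu.mul (cont_prim cvyy)) 0 L).intervalIntegrable _ _
          rw [intervalIntegral.integral_add (hA.add hB) hC,
            intervalIntegral.integral_add hA hB]
  rw [hsplitL, hsplitR, key1, key2, key3]
  ring

end
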